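/- The map T(r, a, δφ, δF, δφF) = (19 − r, a + 2δF − 1, δφF, 1 − δF, δφ) restricts to a bijection from the set of F3-admissible tuples with δF = 0 onto the set of F3-admissible tuples with δF = 1, and each of these two sets has exactly 51 elements. (The two sets are the lists of invariants in Figures 1 and 2 of the paper, for δF = 0 and δF = 1 respectively.) -/

import Mathlib

/-- The invariants `(r, a, δφ, δF, δφF)` of the paper, with `r, a` integers and
`δφ, δF, δφF ∈ {0,1}`, satisfying conditions 0.1--0.7 and I.1--I.8 of the
`𝔽₃` case. -/
def F3Admissible : ℤ × ℤ × ℤ × ℤ × ℤ → Prop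
  | (r, a, dphi, dF, dphiF) =>
    (dphi = 0 ∨ dphi = 1) ∧ (dF = 0 ∨ dF = 1) ∧ (dphiF = 0 ∨ dphiF = 1) ∧
    (1 ≤ r ∧ r ≤ 18) ∧ (0 ≤ a ∧ a ≤ r ∧ a ≤ 20 - r) ∧
    (r + a ≡ 0 [ZMOD 2]) ∧ (dphi = 0 → r ≡ 2 [ZMOD 4]) ∧
    (a = 0 → dphi = 0 ∧ r ≡ 2 [ZMOD 8]) ∧
    (a = 1 → (r ≡ 1 [ZMOD 8] ∨ r ≡ 3 [ZMOD 8])) ∧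
    (a = 2 ∧ r ≡ 6 [ZMOD 8] → dphi = 0) ∧
    (a = r ∧ dphi = 0 → r ≡ 2 [ZMOD 8]) ∧
    (a = 20 - r ∧ dphi = 0 → r ≡ 2 [ZMOD 8]) ∧
    (dF = 0 → dphi = 1) ∧
    (dphiF = 0 → dF = 0 ∧ dphi = 1 ∧ r ≡ 1 [ZMOD 4]) ∧
    (a = 20 - r → dF = 0) ∧
    (a = 20 - r ∧ dphiF = 0 → r ≡ 1 [ZMOD 8]) ∧
    (a = 0 → dF = 1) ∧
    (a = 1 ∧ dF = 0 → dphiF = 0 ∧ r ≡ 1 [ZMOD 8]) ∧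
    (a = 2 ∧ dF = 0 → (r ≡ 0 [ZMOD 8] ∨ r ≡ 2 [ZMOD 8])) ∧
    (a = 3 ∧ dF = 0 ∧ r ≡ 5 [ZMOD 8] → dphiF = 0)


/-- The map `T(r, a, δφ, δF, δφF) = (19 − r, a + 2δF − 1, δφF, 1 − δF, δφ)`
encoding the passage from `φ` to the related involution `φ̃ = τφ`. -/
def F3Related : ℤ × ℤ × ℤ × ℤ × ℤ → ℤ × ℤ × ℤ × ℤ × ℤ
  | (r, a, dphi, dF, dphiF) => (19 - r, a + 2 * dF - 1, dphiF, 1 - dF, dphi)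


instance F3Admissible.dec : DecidablePred F3Admissible := fun ⟨r,a,x,y,z⟩ => by
  dsimp only [F3Admissible]; infer_instance

noncomputable def F3Box : Finset (ℤ × ℤ × ℤ × ℤ × ℤ) :=
  (Finset.Icc 1 18) ×ˢ (Finset.Icc 0 19) ×ˢ ({0,1} : Finset ℤ) ×ˢ ({0,1} : Finset ℤ) ×ˢ
    ({0,1} : Finset ℤ)

noncomputable def F3S (c : ℤ) : Finset (ℤ × ℤ × ℤ × ℤ × ℤ) :=
  F3Box.filter (fun t => F3Admissible t ∧ t.2.2.2.1 = c)

lemma F3_mem_iff (t : ℤ × ℤ × ℤ × ℤ × ℤ) (c : ℤ) :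
    (F3Admissible t ∧ t.2.2.2.1 = c) ↔ t ∈ F3S c := by
  obtain ⟨r, a, x, y, z⟩ := t
  simp only [F3S, F3Box, Finset.mem_filter, Finset.mem_product, Finset.mem_Icc,
    Finset.mem_insert, Finset.mem_singleton]
  refine ⟨fun h => ⟨?_, h⟩, fun h => h.2⟩
  obtain ⟨⟨hx, hy, hz, hr, ha, -⟩, -⟩ := h
  exact ⟨⟨hr.1, hr.2⟩, ⟨ha.1, by omega⟩, hx, hy, hz⟩

lemma F3Related_invol (t : ℤ × ℤ × ℤ × ℤ × ℤ) : F3Related (F3Related t) = t := by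
  obtain ⟨r, a, x, y, z⟩ := t
  show ((19 - (19 - r) : ℤ), ((a + 2 * y - 1) + 2 * (1 - y) - 1 : ℤ), (x : ℤ),
      (1 - (1 - y) : ℤ), (z : ℤ)) = (r, a, x, y, z)
  exact Prod.ext (by ring) (Prod.ext (by ring) (Prod.ext rfl (Prod.ext (by ring) rfl)))

lemma F3_maps01 : ∀ t ∈ F3S 0, F3Related t ∈ F3S 1 := by decide
lemma F3_maps10 : ∀ t ∈ F3S 1, F3Related t ∈ F3S 0 := by decide

/-- `T` restricts to a bijection from the set of `𝔽₃`-admissible tuples with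
`δF = 0` onto the set of those with `δF = 1`, and each of these two sets
(the lists of invariants of Figures 1 and 2 of the paper) has exactly
51 elements. -/
theorem F3Related_bijOn_and_card :
    Set.BijOn F3Related
      {t : ℤ × ℤ × ℤ × ℤ × ℤ | F3Admissible t ∧ t.2.2.2.1 = 0}
      {t : ℤ × ℤ × ℤ × ℤ × ℤ | F3Admissible t ∧ t.2.2.2.1 = 1} ∧
    Set.ncard {t : ℤ × ℤ × ℤ × ℤ × ℤ | F3Admissible t ∧ t.2.2.2.1 = 0} = 51 ∧
    Set.ncard {t : ℤ × ℤ × ℤ × ℤ × ℤ | F3Admissible t ∧ t.2.2.2.1 = 1} = 51 := by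
  have h0 : {t : ℤ × ℤ × ℤ × ℤ × ℤ | F3Admissible t ∧ t.2.2.2.1 = 0} = ↑(F3S 0) :=
    Set.ext fun t => (F3_mem_iff t 0).trans Finset.mem_coe.symm
  have h1 : {t : ℤ × ℤ × ℤ × ℤ × ℤ | F3Admissible t ∧ t.2.2.2.1 = 1} = ↑(F3S 1) :=
    Set.ext fun t => (F3_mem_iff t 1).trans Finset.mem_coe.symm
  rw [h0, h1, Set.ncard_coe_finset, Set.ncard_coe_finset]
  refine ⟨⟨fun t ht => F3_maps01 t ht, fun s _ t _ h => ?_, fun t ht => ?_⟩, by decide, by decide⟩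
  · rw [← F3Related_invol s, h, F3Related_invol]
  · exact ⟨F3Related t, F3_maps10 t ht, F3Related_invol t⟩
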